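/- Under the recurrence x P_n = P_{n+1} + Σ_{j=0}^{r} a_{n,j} P_{n−j}, the recurrence coefficients admit the integral representation a_{n,j} = ∫ x P_n(x) Σ_{ℓ=1}^{r} A_{n+1−j,ℓ}(x) dμ_ℓ(x) for j = 0,1,...,min(r,n), where A_{k,ℓ} are the type I multiple orthogonal polynomials normalized by ∫ x^{k−1} Σ_ℓ A_{k,ℓ}(x) dμ_ℓ(x) = 1. -/
import Mathlib

open Polynomial

/-- The `j`-th entry of the proper multi-index `ν_n`. -/
def properIndex (r n : ℕ) (j : Fin r) : ℕ := (n + r - 1 - j.val) / r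

/-- Type II orthogonality conditions (measures identified with moment functionals). -/
def TypeIISol (r : ℕ) (μ : Fin r → (Polynomial ℂ →ₗ[ℂ] ℂ)) (n : ℕ) (P : Polynomial ℂ) : Prop :=
  P.degree ≤ (n : WithBot ℕ) ∧ ∀ j : Fin r, ∀ ℓ < properIndex r n j, μ j (X ^ ℓ * P) = 0

/-- The proper multi-index `ν_n` is normal. -/
def NormalIndex (r : ℕ) (μ : Fin r → (Polynomial ℂ →ₗ[ℂ] ℂ)) (n : ℕ) : Prop :=
  (∀ P, TypeIISol r μ n P → P = 0 ∨ P.natDegree = n) ∧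
  (∀ P Q, TypeIISol r μ n P → TypeIISol r μ n Q → P ≠ 0 → ∃ c : ℂ, Q = c • P)

/-- Weakly complete system: all proper multi-indices are normal. -/
def WeaklyComplete (r : ℕ) (μ : Fin r → (Polynomial ℂ →ₗ[ℂ] ℂ)) : Prop :=
  ∀ n, NormalIndex r μ n

/-- The type I multiple orthogonal vector polynomials `A_n = (A_{n,1},…,A_{n,r})`,
with the normalization `∫ x^{n-1} ∑_j A_{n,j}(x) dμ_j(x) = 1`. -/
def TypeINormalized (r : ℕ) (μ : Fin r → (Polynomial ℂ →ₗ[ℂ] ℂ))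
    (A : ℕ → Fin r → Polynomial ℂ) : Prop :=
  ∀ n, 1 ≤ n →
    (∀ j : Fin r, (A n j).degree < (properIndex r n j : WithBot ℕ)) ∧
    (∀ ℓ : ℕ, ℓ + 2 ≤ n → ∑ j : Fin r, μ j (X ^ ℓ * A n j) = 0) ∧
    (∑ j : Fin r, μ j (X ^ (n - 1) * A n j) = 1)

/-- properIndex is monotone in `n`. -/
lemma properIndex_mono (r : ℕ) {m k : ℕ} (h : m ≤ k) (j : Fin (r)) :
    properIndex r m j ≤ properIndex r k j := by
  unfold properIndex
  exact Nat.div_le_div_right (by omega)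

/-- Orthogonality of `P k` against any polynomial of small degree. -/
lemma orth_mul (r : ℕ) (μ : Fin r → (Polynomial ℂ →ₗ[ℂ] ℂ))
    (Pk : Polynomial ℂ) (k : ℕ) (hP : TypeIISol r μ k Pk)
    (ℓ : Fin r) (Q : Polynomial ℂ) (hQ : Q.degree < (properIndex r k ℓ : WithBot ℕ)) :
    μ ℓ (Q * Pk) = 0 := by
  rcases eq_or_ne Q 0 with rfl | hQ0
  · simp
  have hnd : Q.natDegree < properIndex r k ℓ := by
    rwa [Polynomial.natDegree_lt_iff_degree_lt hQ0]
  conv_lhs => rw [Q.as_sum_range, Finset.sum_mul, map_sum]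
  refine Finset.sum_eq_zero fun i hi => ?_
  have hiQ : i < properIndex r k ℓ := by
    have := Finset.mem_range.mp hi; omega
  rw [← Polynomial.smul_X_eq_monomial, smul_mul_assoc, map_smul,
    hP.2 ℓ i hiQ, smul_zero]

/-- Pairing of `P k` with the type I vector `A m` for `k + 1 ≤ m`. -/
lemma pairing_P (r : ℕ) (μ : Fin r → (Polynomial ℂ →ₗ[ℂ] ℂ))
    (A : ℕ → Fin r → Polynomial ℂ) (hA : TypeINormalized r μ A)
    (Pk : Polynomial ℂ) (k : ℕ) (hmonic : Pk.Monic) (hdegk : Pk.natDegree = k)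
    {m : ℕ} (hm : 1 ≤ m) (hk : k + 1 ≤ m) :
    ∑ ℓ : Fin r, μ ℓ (Pk * A m ℓ) = if k + 1 = m then 1 else 0 := by
  have hexp : ∀ ℓ : Fin r, μ ℓ (Pk * A m ℓ) =
      ∑ i ∈ Finset.range (k + 1), Pk.coeff i • μ ℓ (X ^ i * A m ℓ) := by
    intro ℓ
    conv_lhs => rw [Pk.as_sum_range, hdegk, Finset.sum_mul, map_sum]
    refine Finset.sum_congr rfl fun i _ => ?_
    rw [← Polynomial.smul_X_eq_monomial, smul_mul_assoc, map_smul]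
  simp only [hexp]
  rw [Finset.sum_comm]
  have hswap : ∀ i ∈ Finset.range (k + 1),
      ∑ ℓ : Fin r, Pk.coeff i • μ ℓ (X ^ i * A m ℓ) =
      Pk.coeff i • ∑ ℓ : Fin r, μ ℓ (X ^ i * A m ℓ) := fun i _ =>
    (Finset.smul_sum).symm
  rw [Finset.sum_congr rfl hswap]
  by_cases hkm : k + 1 = m
  · rw [Finset.sum_eq_single k]
    · have hk1 : k = m - 1 := by omega
      have hc : Pk.coeff k = 1 := by rw [← hdegk]; exact hmonic.coeff_natDegree
      rw [if_pos hkm, hk1, (hA m hm).2.2, ← hk1, hc, one_smul]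
    · intro i hi hik
      have hi' : i + 2 ≤ m := by have := Finset.mem_range.mp hi; omega
      rw [(hA m hm).2.1 i hi', smul_zero]
    · intro h; exact absurd (Finset.self_mem_range_succ k) h
  · rw [if_neg hkm]
    refine Finset.sum_eq_zero fun i hi => ?_
    have hi' : i + 2 ≤ m := by have := Finset.mem_range.mp hi; omega
    rw [(hA m hm).2.1 i hi', smul_zero]

/-- integral representation of the recurrence coefficients:
`a_{n,j} = ∫ x P_n(x) ∑_ℓ A_{n+1-j,ℓ}(x) dμ_ℓ(x)` for `j = 0,…,min(r,n)`. -/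
theorem recurrence_coefficients_integral (r : ℕ) (hr : 0 < r)
    (μ : Fin r → (Polynomial ℂ →ₗ[ℂ] ℂ)) (hwc : WeaklyComplete r μ)
    (P : ℕ → Polynomial ℂ)
    (hmonic : ∀ n, (P n).Monic) (hdeg : ∀ n, (P n).natDegree = n)
    (horth : ∀ n, TypeIISol r μ n (P n))
    (A : ℕ → Fin r → Polynomial ℂ) (hA : TypeINormalized r μ A)
    (a : ℕ → ℕ → ℂ)
    (hrec : ∀ n, X * P n = P (n + 1) +
      ∑ j ∈ Finset.range (r + 1), a n j • (if j ≤ n then P (n - j) else 0)) :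
    ∀ n, ∀ j ≤ min r n,
      a n j = ∑ ℓ : Fin r, μ ℓ (X * P n * A (n + 1 - j) ℓ) := by
  intro n j hj
  have hjr : j ≤ r := le_trans hj (min_le_left _ _)
  have hjn : j ≤ n := le_trans hj (min_le_right _ _)
  set m : ℕ := n + 1 - j with hmdef
  have hm1 : 1 ≤ m := by omega
  -- the linear functional Q ↦ ∑ ℓ, μ ℓ (Q * A m ℓ)
  set s : Polynomial ℂ →ₗ[ℂ] ℂ :=
    ∑ ℓ : Fin r, (μ ℓ).comp (LinearMap.mulRight ℂ (A m ℓ)) with hsdef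
  have hs : ∀ Q : Polynomial ℂ, s Q = ∑ ℓ : Fin r, μ ℓ (Q * A m ℓ) := by
    intro Q
    simp [hsdef, LinearMap.sum_apply, LinearMap.mulRight_apply]
  -- vanishing of s on P k, k ≥ m
  have hfact3 : ∀ k, m ≤ k → s (P k) = 0 := by
    intro k hk
    rw [hs]
    refine Finset.sum_eq_zero fun ℓ _ => ?_
    rw [mul_comm]
    refine orth_mul r μ (P k) k (horth k) ℓ (A m ℓ) ?_
    refine lt_of_lt_of_le ((hA m hm1).1 ℓ) ?_
    exact_mod_cast Nat.cast_le.mpr (properIndex_mono r hk ℓ)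
  -- value of s on P k, k + 1 ≤ m
  have hfact12 : ∀ k, k + 1 ≤ m → s (P k) = if k + 1 = m then 1 else 0 := by
    intro k hk
    rw [hs]
    exact pairing_P r μ A hA (P k) k (hmonic k) (hdeg k) hm1 hk
  -- apply s to the recurrence
  have h1 : s (X * P n) = s (P (n + 1)) +
      ∑ k ∈ Finset.range (r + 1), a n k * s (if k ≤ n then P (n - k) else 0) := by
    rw [hrec n, map_add, map_sum]
    refine congrArg _ (Finset.sum_congr rfl fun k _ => ?_)
    rw [map_smul, smul_eq_mul]
  have hPn1 : s (P (n + 1)) = 0 := hfact3 (n + 1) (by omega)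
  have hsum : ∑ k ∈ Finset.range (r + 1), a n k * s (if k ≤ n then P (n - k) else 0)
      = a n j := by
    rw [Finset.sum_eq_single j]
    · rw [if_pos hjn, hfact12 (n - j) (by omega), if_pos (by omega), mul_one]
    · intro k hk hkj
      rcases le_or_gt k n with hkn | hkn
      · rw [if_pos hkn]
        rcases lt_or_ge k j with hlt | hle
        · rw [hfact3 (n - k) (by omega), mul_zero]
        · have hkj' : j < k := lt_of_le_of_ne hle (Ne.symm hkj)
          rw [hfact12 (n - k) (by omega), if_neg (by omega), mul_zero]
      · rw [if_neg (by omega), map_zero, mul_zero]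
    · intro h
      exact absurd (Finset.mem_range.mpr (by omega)) h
  have := h1
  rw [hPn1, zero_add, hsum] at this
  rw [← this, hs]
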